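/- Let (X, dX) be a d-space and let p : I → X be a continuous path lying in the closure of dX inside the space C(I, X) of continuous maps I → X equipped with the compact-open topology. Then p is weakly directed. (Almost directed paths, i.e., compact-open limits of directed paths, are weakly directed.) -/

import Mathlib

open unitInterval Topology Set

/-- Concatenation of two continuous paths `p q : C(I, X)` with `p 1 = q 0`,
traversing `p` on `[0, 1/2]` and `q` on `[1/2, 1]` (both at double speed). -/
noncomputable def concatPath {X : Type*} [TopologicalSpace X]
    (p q : C(unitInterval, X)) (h : p 1 = q 0) : C(unitInterval, X) :=
  ((⟨p, rfl, rfl⟩ : Path (p 0) (p 1)).trans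
    ((⟨q, rfl, rfl⟩ : Path (q 0) (q 1)).cast h rfl)).toContinuousMap

/-- A d-space structure on a topological space `X`: a set of continuous paths
`I → X` containing the constant paths, closed under concatenation and under
precomposition with continuous non-decreasing maps `I → I`. -/
structure DSpace (X : Type*) [TopologicalSpace X] where
  d : Set C(unitInterval, X)
  const_mem : ∀ x : X, ContinuousMap.const unitInterval x ∈ d
  concat_mem : ∀ p ∈ d, ∀ q ∈ d, ∀ h : p 1 = q 0, concatPath p q h ∈ d
  reparam_mem : ∀ p ∈ d, ∀ φ : C(unitInterval, unitInterval), Monotone ⇑φ → p.comp φ ∈ d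

/-- `c` is a directed function on the (open) set `U` for the set of directed
paths `d`: it is continuous on `U` and non-decreasing along every directed path
with image contained in `U`. -/
def IsDirectedFn {X : Type*} [TopologicalSpace X] (d : Set C(unitInterval, X))
    (U : Set X) (c : X → unitInterval) : Prop :=
  ContinuousOn c U ∧ ∀ p ∈ d, Set.range ⇑p ⊆ U → Monotone (c ∘ ⇑p)

/-- A path `p` is weakly directed when, for every directed function `c` on an
open `U`, the map `c ∘ p` is locally non-decreasing on `p ⁻¹' U`. -/
def IsWeaklyDirected {X : Type*} [TopologicalSpace X] (d : Set C(unitInterval, X))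
    (p : C(unitInterval, X)) : Prop :=
  ∀ U : Set X, IsOpen U → ∀ c : X → unitInterval, IsDirectedFn d U c →
    ∀ t : unitInterval, p t ∈ U →
      ∃ V ∈ 𝓝 t, V ⊆ ⇑p ⁻¹' U ∧ MonotoneOn (c ∘ ⇑p) V

/-- The set `d̂X` of weakly directed paths. -/
def satPaths {X : Type*} [TopologicalSpace X] (d : Set C(unitInterval, X)) :
    Set C(unitInterval, X) :=
  {p | IsWeaklyDirected d p}

/-- A set of directed paths is saturated when every weakly directed path is directed. -/
def IsSaturated {X : Type*} [TopologicalSpace X] (d : Set C(unitInterval, X)) : Prop :=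
  satPaths d = d

/-- Almost directed paths are weakly directed: any continuous path in the closure
of `dX` inside `C(I, X)` (with the compact-open topology, the default topology on
`C(I, X)` in Mathlib) is weakly directed. -/
lemma myaux_monoOn {X : Type*} [TopologicalSpace X] (D : DSpace X) {U : Set X}
    {c : X → unitInterval} (hc : IsDirectedFn D.d U c) {q : C(unitInterval, X)} (hq : q ∈ D.d)
    {a b : unitInterval} (hab : a ≤ b) (hmap : Set.MapsTo ⇑q (Set.Icc a b) U) :
    MonotoneOn (c ∘ ⇑q) (Set.Icc a b) := by
  rcases eq_or_lt_of_le hab with rfl | hab'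
  · intro s hs s' hs' _
    have h1 : s = a := le_antisymm hs.2 hs.1
    have h2 : s' = a := le_antisymm hs'.2 hs'.1
    rw [h1, h2]
  · have hd : (0:ℝ) < (b:ℝ) - a := by
      have := Subtype.coe_lt_coe.2 hab'
      linarith
    have hmem : ∀ x : unitInterval, (a:ℝ) + x * ((b:ℝ) - a) ∈ Set.Icc (0:ℝ) 1 := by
      intro x
      constructor
      · have := x.2.1
        nlinarith [a.2.1]
      · have := x.2.2
        nlinarith [b.2.2]
    set φ : C(unitInterval, unitInterval) :=
      ⟨fun x => ⟨(a:ℝ) + x * ((b:ℝ) - a), hmem x⟩, by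
        refine Continuous.subtype_mk ?_ _
        continuity⟩ with hφdef
    have hφmono : Monotone ⇑φ := by
      intro x y hxy
      have : (x:ℝ) ≤ y := hxy
      simp only [hφdef, ContinuousMap.coe_mk, Subtype.mk_le_mk]
      nlinarith
    have hφrange : ∀ x : unitInterval, φ x ∈ Set.Icc a b := by
      intro x
      constructor
      · show (a:ℝ) ≤ (a:ℝ) + x * ((b:ℝ) - a)
        nlinarith [x.2.1]
      · show (a:ℝ) + (x:ℝ) * ((b:ℝ) - a) ≤ b
        nlinarith [x.2.2]
    have hmono : Monotone (c ∘ ⇑(q.comp φ)) := by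
      refine hc.2 _ (D.reparam_mem q hq φ hφmono) ?_
      rintro _ ⟨x, rfl⟩
      exact hmap (hφrange x)
    intro s hs s' hs' hss'
    have hxm : ∀ s : unitInterval, s ∈ Set.Icc a b →
        ((s:ℝ) - a) / ((b:ℝ) - a) ∈ Set.Icc (0:ℝ) 1 := by
      intro s hs
      constructor
      · apply div_nonneg _ hd.le
        have : (a:ℝ) ≤ s := hs.1
        linarith
      · rw [div_le_one hd]
        have : (s:ℝ) ≤ b := hs.2
        linarith
    set x : unitInterval := ⟨_, hxm s hs⟩
    set x' : unitInterval := ⟨_, hxm s' hs'⟩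
    have hφx : φ x = s := by
      apply Subtype.ext
      show (a:ℝ) + ((s:ℝ) - a) / ((b:ℝ) - a) * ((b:ℝ) - a) = s
      field_simp
      ring
    have hφx' : φ x' = s' := by
      apply Subtype.ext
      show (a:ℝ) + ((s':ℝ) - a) / ((b:ℝ) - a) * ((b:ℝ) - a) = s'
      field_simp
      ring
    have hxx' : x ≤ x' := by
      show ((s:ℝ) - a) / ((b:ℝ) - a) ≤ ((s':ℝ) - a) / ((b:ℝ) - a)
      have hss : (s:ℝ) ≤ s' := hss'
      exact (div_le_div_iff_of_pos_right hd).mpr (by linarith)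
    have := hmono hxx'
    simpa [ContinuousMap.comp_apply, hφx, hφx'] using this

theorem stmt_13 {X : Type*} [TopologicalSpace X] (D : DSpace X)
    (p : C(unitInterval, X)) (hp : p ∈ closure D.d) :
    IsWeaklyDirected D.d p := by
  intro U hU c hc t ht
  have hpre : ⇑p ⁻¹' U ∈ 𝓝 t :=
    p.continuous.continuousAt.preimage_mem_nhds (hU.mem_nhds ht)
  obtain ⟨a, b, hta, hV, hVsub⟩ := exists_Icc_mem_subset_of_mem_nhds hpre
  refine ⟨Set.Icc a b, hV, hVsub, ?_⟩
  intro s hs s' hs' hss'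
  by_contra hlt
  push_neg at hlt
  have hO : IsOpen {f : C(unitInterval, X) | f s ∈ U ∧ f s' ∈ U ∧ c (f s') < c (f s)} := by
    have hO1 : IsOpen {f : C(unitInterval, X) | f s ∈ U ∧ f s' ∈ U} := by
      exact ((hU.preimage (continuous_eval_const s)).inter
        (hU.preimage (continuous_eval_const s')))
    have hcont : ContinuousOn (fun f : C(unitInterval, X) => (c (f s'), c (f s)))
        {f : C(unitInterval, X) | f s ∈ U ∧ f s' ∈ U} := by
      refine ContinuousOn.prodMk ?_ ?_
      · exact hc.1.comp (continuous_eval_const s').continuousOn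
          (fun f hf => hf.2)
      · exact hc.1.comp (continuous_eval_const s).continuousOn
          (fun f hf => hf.1)
    have := hcont.isOpen_inter_preimage hO1
      (isOpen_lt (continuous_fst) (continuous_snd))
    convert this using 1
    ext f
    simp only [Set.mem_setOf_eq, Set.mem_inter_iff, Set.mem_preimage]
    tauto
  have hW : IsOpen ({f : C(unitInterval, X) | Set.MapsTo ⇑f (Set.Icc a b) U} ∩
      {f : C(unitInterval, X) | f s ∈ U ∧ f s' ∈ U ∧ c (f s') < c (f s)}) :=
    (ContinuousMap.isOpen_setOf_mapsTo isClosed_Icc.isCompact hU).inter hO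
  have hpW : p ∈ {f : C(unitInterval, X) | Set.MapsTo ⇑f (Set.Icc a b) U} ∩
      {f : C(unitInterval, X) | f s ∈ U ∧ f s' ∈ U ∧ c (f s') < c (f s)} :=
    ⟨fun x hx => hVsub hx, hVsub hs, hVsub hs', hlt⟩
  obtain ⟨q, hqW, hqd⟩ := mem_closure_iff.mp hp _ hW hpW
  have := myaux_monoOn D hc hqd (hs.1.trans hs.2) hqW.1 hs hs' hss'
  exact absurd this (not_le.2 hqW.2.2.2)
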